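/- Every element of the fundamental group of the Möbius band is an integer power of the class of the central loop: for every g ∈ π₁(M, m₀) there exists n ∈ ℤ with g = [α]^n, where α is the loop t ↦ [(t, 1/2)] traversing the central circle once. -/

import Mathlib

open scoped unitInterval

attribute [local instance] Path.Homotopic.setoid

/-- The gluing relation on the square `[0,1] × [0,1]`: `(0, y)` is identified with
`(1, 1 - y)`. The Möbius band is the quotient by the equivalence relation generated by it. -/
def MobiusRel : I × I → I × I → Prop :=
  fun p q => p.1 = 0 ∧ q.1 = 1 ∧ q.2 = unitInterval.symm p.2

/-- The Möbius band, as the quotient of the square `[0,1] × [0,1]` by the equivalence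
relation generated by identifying `(0, y)` with `(1, 1 - y)`, with the quotient topology. -/
def MobiusBand : Type := Quot MobiusRel

instance : TopologicalSpace MobiusBand :=
  inferInstanceAs (TopologicalSpace (Quot MobiusRel))

/-- The midpoint `1/2` of the unit interval. -/
noncomputable def half : I := ⟨1 / 2, by norm_num⟩

/-- The base point of the Möbius band: the class of the point `(0, 1/2)`. -/
noncomputable def mobiusBase : MobiusBand := Quot.mk MobiusRel ((0 : I), half)

lemma half_symm : half = unitInterval.symm half :=
  Subtype.ext <| by rw [unitInterval.coe_symm_eq]; norm_num [half]

/-- The central loop `α` of the Möbius band: the image in the quotient of the path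
`t ↦ (t, 1/2)`, a loop based at the class of `(0, 1/2)`. -/
noncomputable def mobiusLoop : Path mobiusBase mobiusBase where
  toFun t := Quot.mk MobiusRel (t, half)
  continuous_toFun := continuous_quot_mk.comp (continuous_id.prodMk continuous_const)
  source' := rfl
  target' := (Quot.sound ⟨rfl, rfl, half_symm⟩).symm

/-- The homotopy class of the central loop, as an element of the fundamental group of the
Möbius band. -/
noncomputable def mobiusLoopClass : FundamentalGroup MobiusBand mobiusBase :=
  FundamentalGroup.fromPath (X := TopCat.of MobiusBand) ⟦mobiusLoop⟧

/-! ### Auxiliary development -/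

noncomputable section MobiusAux

open Set

local instance mobiusFact01 : Fact ((0:ℝ) < 1) := ⟨zero_lt_one⟩

/-- The central line of the Möbius band, parametrized by `ℝ` (clipped to `[0,1]`). -/
noncomputable def mq (s : ℝ) : MobiusBand :=
  Quot.mk MobiusRel (Set.projIcc 0 1 zero_le_one s, half)

lemma mq_continuous : Continuous mq :=
  continuous_quot_mk.comp (continuous_projIcc.prodMk continuous_const)

lemma mq_mem (x : ℝ) (hx : x ∈ Set.Icc (0:ℝ) 1) :
    mq x = Quot.mk MobiusRel ((⟨x, hx⟩ : I), half) := by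
  rw [mq, Set.projIcc_of_mem]

lemma mq_coe (x : I) : mq (x : ℝ) = Quot.mk MobiusRel (x, half) := by
  rw [mq_mem _ x.2]

lemma mq_zero : mq 0 = mobiusBase := by
  rw [mq_mem 0 ⟨le_refl _, zero_le_one⟩]; rfl

lemma mq_one : mq 1 = mobiusBase := by
  rw [mq_mem 1 ⟨zero_le_one, le_refl _⟩]
  exact (Quot.sound ⟨rfl, rfl, half_symm⟩).symm

/-- The central circle mapped into the Möbius band, as a map from `AddCircle 1`. -/
noncomputable def mcirc : AddCircle (1:ℝ) → MobiusBand := AddCircle.liftIco 1 0 mq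

lemma mcirc_continuous : Continuous mcirc :=
  AddCircle.liftIco_zero_continuous (by rw [mq_zero, mq_one]) mq_continuous.continuousOn

lemma mcirc_coe (x : ℝ) (hx : x ∈ Set.Icc (0:ℝ) 1) : mcirc (x : AddCircle (1:ℝ)) = mq x := by
  unfold mcirc
  rcases eq_or_lt_of_le hx.2 with h1 | h1
  · have h : ((x : ℝ) : AddCircle (1:ℝ)) = ((0 : ℝ) : AddCircle (1:ℝ)) := by
      rw [h1]
      simp [AddCircle.coe_period]
    rw [h, AddCircle.liftIco_zero_coe_apply ⟨le_refl _, zero_lt_one⟩, mq_zero, h1, mq_one]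
  · exact AddCircle.liftIco_zero_coe_apply ⟨hx.1, h1⟩

lemma mcirc_int_add (k : ℤ) (x : ℝ) (hx : x ∈ Set.Icc (0:ℝ) 1) :
    mcirc (((k : ℝ) + x : ℝ) : AddCircle (1:ℝ)) = mq x := by
  have h : (((k : ℝ) + x : ℝ) : AddCircle (1:ℝ)) = (x : AddCircle (1:ℝ)) := by
    have hk : (((k : ℝ) : ℝ) : AddCircle (1:ℝ)) = 0 :=
      (AddCircle.coe_eq_zero_iff (1:ℝ)).mpr ⟨k, by simp⟩
    have : (((k : ℝ) + x : ℝ) : AddCircle (1:ℝ)) =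
        (((k : ℝ) : ℝ) : AddCircle (1:ℝ)) + (x : AddCircle (1:ℝ)) := rfl
    rw [this, hk, zero_add]
  rw [h, mcirc_coe x hx]

/-- Projection of the Möbius band to the circle, remembering the first coordinate. -/
noncomputable def mproj : MobiusBand → AddCircle (1:ℝ) :=
  Quot.lift (fun p : I × I => (((p.1 : ℝ) : ℝ) : AddCircle (1:ℝ)))
    (by
      rintro ⟨x, y⟩ ⟨x', y'⟩ ⟨h0, h1, -⟩
      obtain rfl : x = 0 := h0
      obtain rfl : x' = 1 := h1
      show (((0:I) : ℝ) : AddCircle (1:ℝ)) = (((1:I) : ℝ) : AddCircle (1:ℝ))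
      have e0 : ((0:I) : ℝ) = 0 := rfl
      have e1 : ((1:I) : ℝ) = 1 := rfl
      rw [e0, e1]
      simp [AddCircle.coe_period])

lemma mproj_continuous : Continuous mproj :=
  continuous_quot_lift _
    ((AddCircle.continuous_mk' 1).comp (continuous_subtype_val.comp continuous_fst))

lemma mproj_base : mproj mobiusBase = 0 := by
  show ((((0:I) : ℝ) : ℝ) : AddCircle (1:ℝ)) = 0
  norm_num

lemma mcirc_mproj (m : MobiusBand) :
    mcirc (mproj m) = Quot.lift (fun p : I × I => Quot.mk MobiusRel (p.1, half))
      (fun p q h => by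
        apply Quot.sound
        exact ⟨h.1, h.2.1, half_symm⟩) m := by
  refine Quot.inductionOn m fun xy => ?_
  show mcirc (((xy.1 : ℝ) : ℝ) : AddCircle (1:ℝ)) = Quot.mk MobiusRel (xy.1, half)
  rw [mcirc_coe _ xy.1.2, mq_coe]

/-- Linear interpolation in the fibre direction, from `y` towards `1/2`. -/
noncomputable def mlerp (s y : I) : I :=
  ⟨(1 - (s:ℝ)) * y + (s:ℝ) * (1/2), by
    constructor
    · nlinarith [s.2.1, s.2.2, y.2.1, y.2.2]
    · nlinarith [s.2.1, s.2.2, y.2.1, y.2.2]⟩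

lemma mlerp_symm (s y : I) :
    mlerp s (unitInterval.symm y) = unitInterval.symm (mlerp s y) := by
  apply Subtype.ext
  simp only [mlerp, unitInterval.coe_symm_eq]
  ring

lemma mlerp_zero (y : I) : mlerp 0 y = y := by
  apply Subtype.ext
  simp [mlerp]

lemma mlerp_one (y : I) : mlerp 1 y = half := by
  apply Subtype.ext
  simp [mlerp, half]

lemma mlerp_half (s : I) : mlerp s half = half := by
  apply Subtype.ext
  simp only [mlerp, half]
  ring_nf

/-- The deformation retraction of the Möbius band onto its central circle. -/
noncomputable def mret : I × MobiusBand → MobiusBand := fun p =>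
  Quot.lift (fun xy : I × I => Quot.mk MobiusRel (xy.1, mlerp p.1 xy.2))
    (by
      rintro ⟨x, y⟩ ⟨x', y'⟩ ⟨h0, h1, h2⟩
      apply Quot.sound
      exact ⟨h0, h1, by rw [h2, mlerp_symm]⟩) p.2

lemma mret_continuous : Continuous mret := by
  apply (isQuotientMap_quot_mk (r := MobiusRel)).continuous_lift_prod_right
  show Continuous fun p : I × (I × I) => Quot.mk MobiusRel (p.2.1, mlerp p.1 p.2.2)
  apply continuous_quot_mk.comp
  refine (continuous_fst.comp continuous_snd).prodMk (Continuous.subtype_mk ?_ _)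
  fun_prop

lemma mret_zero (m : MobiusBand) : mret (0, m) = m := by
  refine Quot.inductionOn m fun xy => ?_
  show Quot.mk MobiusRel (xy.1, mlerp 0 xy.2) = Quot.mk MobiusRel xy
  rw [mlerp_zero]

lemma mret_one (m : MobiusBand) : mret (1, m) = mcirc (mproj m) := by
  rw [mcirc_mproj]
  refine Quot.inductionOn m fun xy => ?_
  show Quot.mk MobiusRel (xy.1, mlerp 1 xy.2) = Quot.mk MobiusRel (xy.1, half)
  rw [mlerp_one]

lemma mret_base (s : I) : mret (s, mobiusBase) = mobiusBase := by
  show Quot.mk MobiusRel ((0:I), mlerp s half) = mobiusBase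
  rw [mlerp_half]; rfl

lemma abs_min_sub_min (a x y : ℝ) : |min a x - min a y| ≤ |x - y| := by
  rcases le_total a x with h1 | h1 <;> rcases le_total a y with h2 | h2 <;>
    rw [abs_le] <;> constructor <;>
    simp only [min_eq_left h1, min_eq_right h1, min_eq_left h2, min_eq_right h2] <;>
    [skip; skip; skip; skip; skip; skip; skip; skip] <;>
    first
      | linarith [le_abs_self (x - y), neg_abs_le (x - y)]
      | nlinarith [le_abs_self (x - y), neg_abs_le (x - y)]

/-- Path lifting for loops in `AddCircle 1`. -/
lemma mobius_exists_lift (δ : C(I, AddCircle (1:ℝ))) (hδ0 : δ 0 = 0) :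
    ∃ L : I → ℝ, Continuous L ∧ L 0 = 0 ∧
      ∀ t, ((L t : ℝ) : AddCircle (1:ℝ)) = δ t := by
  have huc : UniformContinuous δ := CompactSpace.uniformContinuous_of_continuous δ.continuous
  rw [Metric.uniformContinuous_iff] at huc
  obtain ⟨d, hd, hball⟩ := huc (1/2) (by norm_num)
  obtain ⟨N, hN⟩ := exists_nat_one_div_lt hd
  set c : ℝ := (N : ℝ) + 1 with hc
  have hc0 : (0:ℝ) < c := by positivity
  set w : ℕ → I → I := fun k t =>
    ⟨min (t : ℝ) ((k : ℝ) / c),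
      le_min t.2.1 (by positivity), le_trans (min_le_left _ _) t.2.2⟩ with hw
  have hwcont : ∀ k, Continuous (w k) :=
    fun k => (continuous_subtype_val.min continuous_const).subtype_mk _
  have hwd : ∀ (k : ℕ) (t : I), dist (w (k+1) t) (w k t) < d := by
    intro k t
    have h1 : dist (w (k+1) t) (w k t) ≤ |((k+1 : ℕ) : ℝ) / c - (k : ℝ) / c| := by
      rw [Subtype.dist_eq, Real.dist_eq]
      exact abs_min_sub_min _ _ _
    have h2 : |((k+1 : ℕ) : ℝ) / c - (k : ℝ) / c| = 1 / c := by
      have he : ((k+1 : ℕ) : ℝ) / c - (k : ℝ) / c = 1 / c := by push_cast; ring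
      rw [he, abs_of_nonneg (by positivity)]
    calc dist (w (k+1) t) (w k t) ≤ 1 / c := h1.trans_eq h2
      _ < d := hN
  set ρ : AddCircle (1:ℝ) → ℝ :=
    fun z => ((AddCircle.equivIoc 1 (-(1/2)) z : Set.Ioc (-(1/2):ℝ) (-(1/2) + 1)) : ℝ) with hρ
  have hρcoe : ∀ z, ((ρ z : ℝ) : AddCircle (1:ℝ)) = z :=
    fun z => (AddCircle.equivIoc 1 (-(1/2))).symm_apply_apply z
  have hρx : ∀ x : ℝ, x ∈ Set.Ioc (-(1/2):ℝ) (1/2) → ρ ((x : ℝ) : AddCircle (1:ℝ)) = x := by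
    intro x hx
    show ((AddCircle.equivIoc 1 (-(1/2)) ((x : ℝ) : AddCircle (1:ℝ)) :
      Set.Ioc (-(1/2):ℝ) (-(1/2) + 1)) : ℝ) = x
    rw [AddCircle.equivIoc, QuotientAddGroup.equivIocMod_coe]
    exact (toIocMod_eq_self _).mpr (by constructor <;> [exact hx.1; linarith [hx.2]])
  have hρ0 : ρ (0 : AddCircle (1:ℝ)) = 0 := by
    have : ((0:ℝ) : AddCircle (1:ℝ)) = 0 := rfl
    rw [← this, hρx 0 (by norm_num)]
  have hhalfnorm : ‖((-(1/2) : ℝ) : AddCircle (1:ℝ))‖ = 1/2 := by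
    rw [AddCircle.norm_eq]
    have : round ((1:ℝ)⁻¹ * (-(1/2))) = 0 := by
      rw [round_eq]
      norm_num
    rw [this]
    norm_num
  have hρcont : ∀ z : AddCircle (1:ℝ), ‖z‖ < 1/2 → ContinuousAt ρ z := by
    intro z hz
    have hne : z ≠ ((-(1/2) : ℝ) : AddCircle (1:ℝ)) := by
      intro h
      rw [h, hhalfnorm] at hz
      linarith
    exact continuous_subtype_val.continuousAt.comp
      (AddCircle.continuousAt_equivIoc 1 (-(1/2)) hne)
  set zf : ℕ → I → AddCircle (1:ℝ) := fun k t => δ (w (k+1) t) - δ (w k t) with hzf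
  have hznorm : ∀ k t, ‖zf k t‖ < 1/2 := by
    intro k t
    have : dist (δ (w (k+1) t)) (δ (w k t)) < 1/2 := hball (hwd k t)
    rwa [dist_eq_norm] at this
  have hzcont : ∀ k, Continuous (zf k) :=
    fun k => (δ.continuous.comp (hwcont (k+1))).sub (δ.continuous.comp (hwcont k))
  refine ⟨fun t => ∑ k ∈ Finset.range (N+1), ρ (zf k t), ?_, ?_, ?_⟩
  · exact continuous_finset_sum _ fun k _ => continuous_iff_continuousAt.mpr fun t =>
      (hρcont _ (hznorm k t)).comp (hzcont k).continuousAt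
  · have hw0 : ∀ k : ℕ, w k 0 = 0 := by
      intro k
      apply Subtype.ext
      show min ((0:I) : ℝ) ((k:ℝ)/c) = ((0:I) : ℝ)
      have : ((0:I) : ℝ) = 0 := rfl
      rw [this]
      exact min_eq_left (by positivity)
    have : ∀ k : ℕ, zf k 0 = 0 := by
      intro k
      show δ (w (k+1) 0) - δ (w k 0) = 0
      rw [hw0, hw0, sub_self]
    simp only [this, hρ0, Finset.sum_const, smul_zero]
  · intro t
    have hsum : ((((∑ k ∈ Finset.range (N+1), ρ (zf k t)) : ℝ)) : AddCircle (1:ℝ)) =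
        ∑ k ∈ Finset.range (N+1), ((ρ (zf k t) : ℝ) : AddCircle (1:ℝ)) :=
      map_sum (QuotientAddGroup.mk' (AddSubgroup.zmultiples (1:ℝ))) _ _
    rw [hsum]
    simp only [hρcoe]
    rw [Finset.sum_range_sub (fun k => δ (w k t))]
    have hwN : w (N+1) t = t := by
      apply Subtype.ext
      show min ((t:ℝ)) (((N+1 : ℕ):ℝ)/c) = (t:ℝ)
      apply min_eq_left
      have : ((N+1 : ℕ):ℝ)/c = 1 := by
        rw [hc]
        push_cast
        field_simp
      rw [this]
      exact t.2.2
    have hw0 : w 0 t = 0 := by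
      apply Subtype.ext
      show min ((t:ℝ)) (((0:ℕ):ℝ)/c) = ((0:I) : ℝ)
      have h1 : (((0:ℕ):ℝ)/c) = 0 := by norm_num
      have h2 : ((0:I) : ℝ) = 0 := rfl
      rw [h1, h2]
      exact min_eq_right t.2.1
    rw [hwN, hw0, hδ0, sub_zero]

/-- The `m`-fold central loop. -/
noncomputable def mpow (m : ℤ) : Path mobiusBase mobiusBase where
  toFun t := mcirc (((m : ℝ) * (t : ℝ) : ℝ) : AddCircle (1:ℝ))
  continuous_toFun := mcirc_continuous.comp ((AddCircle.continuous_mk' 1).comp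
    (continuous_const.mul continuous_subtype_val))
  source' := by
    show mcirc (((m : ℝ) * (((0:I)) : ℝ) : ℝ) : AddCircle (1:ℝ)) = mobiusBase
    have h : ((m : ℝ) * (((0:I)) : ℝ) : ℝ) = 0 := by
      have h0 : ((0:I) : ℝ) = 0 := rfl
      rw [h0, mul_zero]
    rw [h, mcirc_coe 0 ⟨le_refl _, zero_le_one⟩, mq_zero]
  target' := by
    show mcirc (((m : ℝ) * (((1:I)) : ℝ) : ℝ) : AddCircle (1:ℝ)) = mobiusBase
    have h : ((m : ℝ) * (((1:I)) : ℝ) : ℝ) = (m : ℝ) + 0 := by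
      have h1 : ((1:I) : ℝ) = 1 := rfl
      rw [h1]; ring
    rw [h, mcirc_int_add m 0 ⟨le_refl _, zero_le_one⟩, mq_zero]

lemma mpow_apply (m : ℤ) (x : I) :
    mpow m x = mcirc (((m : ℝ) * (x : ℝ) : ℝ) : AddCircle (1:ℝ)) := rfl

lemma mobiusLoop_apply (x : I) : mobiusLoop x = Quot.mk MobiusRel (x, half) := rfl

lemma mobiusLoop_symm_apply (x : I) :
    mobiusLoop.symm x = Quot.mk MobiusRel (unitInterval.symm x, half) := rfl

/-- Two loops tracing the central circle with homotopic "angle" functions are homotopic. -/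
lemma mcirc_homotopic (A B : I → ℝ) (hA : Continuous A) (hB : Continuous B)
    (hAB0 : A 0 = B 0) (hAB1 : A 1 = B 1)
    (pA pB : Path mobiusBase mobiusBase)
    (hpA : ∀ t, pA t = mcirc ((A t : ℝ) : AddCircle (1:ℝ)))
    (hpB : ∀ t, pB t = mcirc ((B t : ℝ) : AddCircle (1:ℝ))) :
    pA.Homotopic pB := by
  have hcont : Continuous fun p : I × I =>
      mcirc ((((1 - (p.1 : ℝ)) * A p.2 + (p.1 : ℝ) * B p.2 : ℝ)) : AddCircle (1:ℝ)) := by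
    apply mcirc_continuous.comp
    apply (AddCircle.continuous_mk' 1).comp
    fun_prop
  refine ⟨{ toFun := fun p =>
              mcirc ((((1 - (p.1 : ℝ)) * A p.2 + (p.1 : ℝ) * B p.2 : ℝ)) : AddCircle (1:ℝ))
            continuous_toFun := hcont
            map_zero_left := fun x => ?_
            map_one_left := fun x => ?_
            prop' := ?_ }⟩
  · show mcirc ((((1 - (((0:I)) : ℝ)) * A x + (((0:I)) : ℝ) * B x : ℝ)) : AddCircle (1:ℝ)) = pA x
    rw [hpA x]
    refine congrArg mcirc (congrArg (fun r : ℝ => ((r : ℝ) : AddCircle (1:ℝ))) ?_)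
    have h0 : (((0:I)) : ℝ) = 0 := rfl
    rw [h0]; ring
  · show mcirc ((((1 - (((1:I)) : ℝ)) * A x + (((1:I)) : ℝ) * B x : ℝ)) : AddCircle (1:ℝ)) = pB x
    rw [hpB x]
    refine congrArg mcirc (congrArg (fun r : ℝ => ((r : ℝ) : AddCircle (1:ℝ))) ?_)
    have h1 : (((1:I)) : ℝ) = 1 := rfl
    rw [h1]; ring
  · intro s x hx
    simp only [Set.mem_insert_iff, Set.mem_singleton_iff] at hx
    rcases hx with rfl | rfl
    · show mcirc ((((1 - ((s:I) : ℝ)) * A 0 + ((s:I) : ℝ) * B 0 : ℝ)) : AddCircle (1:ℝ)) = pA 0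
      rw [hpA 0]
      refine congrArg mcirc (congrArg (fun r : ℝ => ((r : ℝ) : AddCircle (1:ℝ))) ?_)
      rw [← hAB0]; ring
    · show mcirc ((((1 - ((s:I) : ℝ)) * A 1 + ((s:I) : ℝ) * B 1 : ℝ)) : AddCircle (1:ℝ)) = pA 1
      rw [hpA 1]
      refine congrArg mcirc (congrArg (fun r : ℝ => ((r : ℝ) : AddCircle (1:ℝ))) ?_)
      rw [← hAB1]; ring

lemma mpow_trans_loop (k : ℕ) :
    ((mpow k).trans mobiusLoop).Homotopic (mpow ((k:ℤ) + 1)) := by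
  have hk0 : (0:ℝ) ≤ (k:ℝ) := Nat.cast_nonneg k
  refine mcirc_homotopic
    (fun t => min (2 * (t:ℝ) * (k:ℝ)) (k:ℝ) + max (2 * (t:ℝ) - 1) 0)
    (fun t => (((k:ℤ) + 1 : ℤ) : ℝ) * (t:ℝ)) (by fun_prop) (by fun_prop) ?_ ?_ _ _ ?_ ?_
  · show min (2 * (((0:I)) : ℝ) * (k:ℝ)) (k:ℝ) + max (2 * (((0:I)) : ℝ) - 1) 0 =
      (((k:ℤ) + 1 : ℤ) : ℝ) * (((0:I)) : ℝ)
    have h0 : ((0:I) : ℝ) = 0 := rfl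
    rw [h0]
    rw [show 2 * (0:ℝ) * (k:ℝ) = 0 by ring, min_eq_left hk0]
    rw [show 2 * (0:ℝ) - 1 = -1 by ring, max_eq_right (by norm_num : (-1:ℝ) ≤ 0)]
    ring
  · show min (2 * (((1:I)) : ℝ) * (k:ℝ)) (k:ℝ) + max (2 * (((1:I)) : ℝ) - 1) 0 =
      (((k:ℤ) + 1 : ℤ) : ℝ) * (((1:I)) : ℝ)
    have h1 : ((1:I) : ℝ) = 1 := rfl
    rw [h1]
    rw [show 2 * (1:ℝ) * (k:ℝ) = 2 * (k:ℝ) by ring, min_eq_right (by linarith)]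
    rw [show 2 * (1:ℝ) - 1 = 1 by ring, max_eq_left (by norm_num : (0:ℝ) ≤ 1)]
    push_cast
    ring
  · intro t
    rw [Path.trans_apply]
    split_ifs with h
    · rw [mpow_apply]
      refine congrArg mcirc (congrArg (fun r : ℝ => ((r : ℝ) : AddCircle (1:ℝ))) ?_)
      show ((k:ℤ) : ℝ) * (2 * (t:ℝ)) =
        min (2 * (t:ℝ) * (k:ℝ)) (k:ℝ) + max (2 * (t:ℝ) - 1) 0
      rw [min_eq_left (by nlinarith [t.2.1]), max_eq_right (by linarith : 2 * (t:ℝ) - 1 ≤ 0)]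
      push_cast
      ring
    · push_neg at h
      have hmem : (2 * (t:ℝ) - 1) ∈ Set.Icc (0:ℝ) 1 := ⟨by linarith, by linarith [t.2.2]⟩
      have he : (min (2 * (t:ℝ) * (k:ℝ)) (k:ℝ) + max (2 * (t:ℝ) - 1) 0 : ℝ) =
          ((k:ℤ) : ℝ) + (2 * (t:ℝ) - 1) := by
        rw [min_eq_right (by nlinarith [t.2.2]), max_eq_left (by linarith)]
        push_cast
        ring
      show mobiusLoop ⟨2 * (t:ℝ) - 1, _⟩ =
        mcirc ((min (2 * (t:ℝ) * (k:ℝ)) (k:ℝ) + max (2 * (t:ℝ) - 1) 0 : ℝ) : AddCircle (1:ℝ))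
      rw [he, mcirc_int_add k _ hmem, mq_mem _ hmem]
      rfl
  · intro t
    rw [mpow_apply]

lemma mpow_trans_loop_symm (k : ℕ) :
    ((mpow (-(k:ℤ))).trans mobiusLoop.symm).Homotopic (mpow (-(k:ℤ) - 1)) := by
  have hk0 : (0:ℝ) ≤ (k:ℝ) := Nat.cast_nonneg k
  refine mcirc_homotopic
    (fun t => max (2 * (t:ℝ) * (-(k:ℝ))) (-(k:ℝ)) + min (1 - 2 * (t:ℝ)) 0)
    (fun t => ((-(k:ℤ) - 1 : ℤ) : ℝ) * (t:ℝ)) (by fun_prop) (by fun_prop) ?_ ?_ _ _ ?_ ?_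
  · show max (2 * (((0:I)) : ℝ) * (-(k:ℝ))) (-(k:ℝ)) + min (1 - 2 * (((0:I)) : ℝ)) 0 =
      ((-(k:ℤ) - 1 : ℤ) : ℝ) * (((0:I)) : ℝ)
    have h0 : ((0:I) : ℝ) = 0 := rfl
    rw [h0]
    rw [show 2 * (0:ℝ) * (-(k:ℝ)) = 0 by ring, max_eq_left (by linarith)]
    rw [show 1 - 2 * (0:ℝ) = 1 by ring, min_eq_right (by norm_num : (0:ℝ) ≤ 1)]
    ring
  · show max (2 * (((1:I)) : ℝ) * (-(k:ℝ))) (-(k:ℝ)) + min (1 - 2 * (((1:I)) : ℝ)) 0 =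
      ((-(k:ℤ) - 1 : ℤ) : ℝ) * (((1:I)) : ℝ)
    have h1 : ((1:I) : ℝ) = 1 := rfl
    rw [h1]
    rw [show 2 * (1:ℝ) * (-(k:ℝ)) = -(2 * (k:ℝ)) by ring, max_eq_right (by linarith)]
    rw [show 1 - 2 * (1:ℝ) = -1 by ring, min_eq_left (by norm_num : (-1:ℝ) ≤ 0)]
    push_cast
    ring
  · intro t
    rw [Path.trans_apply]
    split_ifs with h
    · rw [mpow_apply]
      refine congrArg mcirc (congrArg (fun r : ℝ => ((r : ℝ) : AddCircle (1:ℝ))) ?_)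
      show ((-(k:ℤ) : ℤ) : ℝ) * (2 * (t:ℝ)) =
        max (2 * (t:ℝ) * (-(k:ℝ))) (-(k:ℝ)) + min (1 - 2 * (t:ℝ)) 0
      rw [max_eq_left (by nlinarith [t.2.1]), min_eq_right (by linarith : (0:ℝ) ≤ 1 - 2 * (t:ℝ))]
      push_cast
      ring
    · push_neg at h
      have hmem : (2 - 2 * (t:ℝ)) ∈ Set.Icc (0:ℝ) 1 := ⟨by linarith [t.2.2], by linarith⟩
      have he : (max (2 * (t:ℝ) * (-(k:ℝ))) (-(k:ℝ)) + min (1 - 2 * (t:ℝ)) 0 : ℝ) =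
          ((-(k:ℤ) - 1 : ℤ) : ℝ) + (2 - 2 * (t:ℝ)) := by
        rw [max_eq_right (by nlinarith [t.2.2]), min_eq_left (by linarith)]
        push_cast
        ring
      show mobiusLoop.symm ⟨2 * (t:ℝ) - 1, _⟩ =
        mcirc ((max (2 * (t:ℝ) * (-(k:ℝ))) (-(k:ℝ)) + min (1 - 2 * (t:ℝ)) 0 : ℝ) : AddCircle (1:ℝ))
      rw [he, mcirc_int_add _ _ hmem, mq_mem _ hmem, mobiusLoop_symm_apply]
      refine congrArg (Quot.mk MobiusRel) (Prod.ext (Subtype.ext ?_) rfl)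
      show (1:ℝ) - (2 * (t:ℝ) - 1) = 2 - 2 * (t:ℝ)
      ring
  · intro t
    rw [mpow_apply]

/-- An element of the fundamental group from a homotopy class of loops. -/
noncomputable def mclassQ (q : Path.Homotopic.Quotient mobiusBase mobiusBase) :
    FundamentalGroup MobiusBand mobiusBase :=
  FundamentalGroup.fromPath (X := TopCat.of MobiusBand) q

lemma mclass_loop : mclassQ ⟦mobiusLoop⟧ = mobiusLoopClass := rfl

lemma mclass_trans (p q : Path mobiusBase mobiusBase) :
    mclassQ ⟦p.trans q⟧ = mclassQ ⟦q⟧ * mclassQ ⟦p⟧ := by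
  rfl

open CategoryTheory in
lemma mclass_symm : mclassQ ⟦mobiusLoop.symm⟧ = mobiusLoopClass⁻¹ := by
  apply eq_inv_of_mul_eq_one_left
  show (⟦mobiusLoop.trans mobiusLoop.symm⟧ : Path.Homotopic.Quotient _ _) = ⟦Path.refl _⟧
  exact Quotient.sound ⟨(Path.Homotopy.reflTransSymm mobiusLoop).symm⟩

lemma mpow_class (m : ℤ) : mclassQ ⟦mpow m⟧ = mobiusLoopClass ^ m := by
  induction m using Int.induction_on with
  | zero =>
    have h : mpow 0 = Path.refl mobiusBase := by
      ext t
      show mcirc ((((0:ℤ) : ℝ) * (t:ℝ) : ℝ) : AddCircle (1:ℝ)) = mobiusBase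
      rw [show ((0:ℤ) : ℝ) * (t:ℝ) = 0 by push_cast; ring,
        mcirc_coe 0 ⟨le_refl _, zero_le_one⟩, mq_zero]
    rw [h, zpow_zero]
    rfl
  | succ k ih =>
    rw [← congrArg mclassQ (Quotient.sound (mpow_trans_loop k)), mclass_trans, mclass_loop, ih,
      show ((k:ℤ) + 1) = 1 + (k:ℤ) by ring, zpow_add, zpow_one]
  | pred k ih =>
    rw [← congrArg mclassQ (Quotient.sound (mpow_trans_loop_symm k)), mclass_trans, mclass_symm,
      ih, show (-(k:ℤ) - 1) = -1 + -(k:ℤ) by ring, zpow_add, zpow_neg_one]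

end MobiusAux

/-- Every element of the fundamental group of the Möbius band is an integer power of the
class of the central loop `t ↦ [(t, 1/2)]`. -/
theorem mobiusBand_fundamentalGroup_generated_by_loop
    (g : FundamentalGroup MobiusBand mobiusBase) :
    ∃ n : ℤ, g = mobiusLoopClass ^ n := by
  obtain ⟨γ, hγ⟩ :=
    Quotient.exists_rep (FundamentalGroup.toPath (X := TopCat.of MobiusBand) (x := mobiusBase) g)
  -- the angle function of the loop
  have hδc : Continuous fun t : I => mproj (γ t) := mproj_continuous.comp γ.continuous
  set δ : C(I, AddCircle (1:ℝ)) := ⟨fun t => mproj (γ t), hδc⟩ with hδ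
  have hδ0 : δ 0 = 0 := by
    show mproj (γ 0) = 0
    rw [γ.source]
    exact mproj_base
  obtain ⟨L, hLc, hL0, hLcoe⟩ := mobius_exists_lift δ hδ0
  -- the winding number
  have hL1 : ((L 1 : ℝ) : AddCircle (1:ℝ)) = 0 := by
    rw [hLcoe 1]
    show mproj (γ 1) = 0
    rw [γ.target]
    exact mproj_base
  obtain ⟨n, hn'⟩ := (AddCircle.coe_eq_zero_iff (1:ℝ)).mp hL1
  have hn : (n : ℝ) = L 1 := by rw [← hn']; simp
  -- the retracted loop
  set Γ : Path mobiusBase mobiusBase :=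
    { toFun := fun t => mcirc ((L t : ℝ) : AddCircle (1:ℝ))
      continuous_toFun := mcirc_continuous.comp ((AddCircle.continuous_mk' 1).comp hLc)
      source' := by
        show mcirc ((L 0 : ℝ) : AddCircle (1:ℝ)) = mobiusBase
        rw [hL0]
        exact (mcirc_coe 0 ⟨le_refl _, zero_le_one⟩).trans mq_zero
      target' := by
        show mcirc ((L 1 : ℝ) : AddCircle (1:ℝ)) = mobiusBase
        have h : L 1 = (n : ℝ) + 0 := by rw [← hn, add_zero]
        rw [h]
        exact (mcirc_int_add n 0 ⟨le_refl _, zero_le_one⟩).trans mq_zero } with hΓ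
  -- the loop is homotopic to its retraction onto the central circle
  have h1 : γ.Homotopic Γ := by
    refine ⟨{ toFun := fun p => mret (p.1, γ p.2)
              continuous_toFun :=
                mret_continuous.comp (continuous_fst.prodMk (γ.continuous.comp continuous_snd))
              map_zero_left := fun x => mret_zero (γ x)
              map_one_left := fun x => ?_
              prop' := ?_ }⟩
    · show mret (1, γ x) = Γ x
      rw [mret_one]
      show mcirc (mproj (γ x)) = mcirc ((L x : ℝ) : AddCircle (1:ℝ))
      rw [hLcoe x]
      rfl
    · intro s x hx
      simp only [Set.mem_insert_iff, Set.mem_singleton_iff] at hx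
      rcases hx with rfl | rfl
      · show mret (s, γ 0) = γ 0
        rw [γ.source]
        exact mret_base s
      · show mret (s, γ 1) = γ 1
        rw [γ.target]
        exact mret_base s
  -- the retracted loop is homotopic to the `n`-fold central loop
  have h2 : Γ.Homotopic (mpow n) := by
    refine mcirc_homotopic L (fun t => ((n:ℤ) : ℝ) * (t:ℝ)) hLc (by fun_prop) ?_ ?_ _ _
      (fun t => rfl) (fun t => rfl)
    · show L 0 = (n : ℝ) * (((0:I)) : ℝ)
      have h0 : ((0:I) : ℝ) = 0 := rfl
      rw [hL0, h0, mul_zero]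
    · show L 1 = (n : ℝ) * (((1:I)) : ℝ)
      have h1' : ((1:I) : ℝ) = 1 := rfl
      rw [← hn, h1', mul_one]
  -- conclude
  refine ⟨n, ?_⟩
  have hg : g = mclassQ ⟦γ⟧ := by
    exact hγ.symm
  rw [hg, congrArg mclassQ (Quotient.sound h1), congrArg mclassQ (Quotient.sound h2),
    mpow_class]
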